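/- Every strict quotient map between game trees is a quotient map, but there exists a quotient map in the category of game trees and chronological maps that is not a strict quotient map. -/

import Mathlib

open Classical

/-- A game tree over `M`: a set of finite sequences closed under truncation,
in which every element admits a one-step extension. -/
def IsGameTree {M : Type*} (T : Set (List M)) : Prop :=
  (∀ t ∈ T, ∀ k ≤ t.length, t.take k ∈ T) ∧ (∀ t ∈ T, ∃ x : M, t ++ [x] ∈ T)

/-- The initial segment of length `n` of an infinite sequence. -/
def runPre {M : Type*} (R : ℕ → M) (n : ℕ) : List M := List.ofFn fun i : Fin n => R i.1

/-- The runs (branches) of a game tree. -/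
def GameRun {M : Type*} (T : Set (List M)) : Set (ℕ → M) := {R | ∀ n : ℕ, runPre R n ∈ T}

/-- A chronological map between game trees: preserves length and truncation. -/
def IsChron {M N : Type*} (T₁ : Set (List M)) (T₂ : Set (List N))
    (f : List M → List N) : Prop :=
  (∀ t ∈ T₁, f t ∈ T₂) ∧ (∀ t ∈ T₁, (f t).length = t.length) ∧
    (∀ t ∈ T₁, ∀ k ≤ t.length, f (t.take k) = (f t).take k)

/-- `Δ(R,R')`: the least index where two infinite sequences differ (`⊤` if equal). -/
noncomputable def runDelta {M : Type*} (R R' : ℕ → M) : ℕ∞ :=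
  sInf ((fun n : ℕ => (n : ℕ∞)) '' {n : ℕ | R n ≠ R' n})

/-- The ultrametric `d_T` on runs: `1/(Δ(R,R')+1)` for distinct runs, `0` otherwise. -/
noncomputable def runDist {M : Type*} (R R' : ℕ → M) : ℝ :=
  if R = R' then 0 else (((runDelta R R').toNat : ℝ) + 1)⁻¹

/-- A quotient map between game trees: a surjective chronological map such that
moments of equal length are identified iff they are connected by a chain of runs
as in the definition of quotient maps. -/
def ChronQuotient {M N : Type*} (T : Set (List M)) (Q : Set (List N))
    (q : List M → List N) : Prop :=
  (∀ s ∈ Q, ∃ t ∈ T, q t = s) ∧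
    ∀ N' : ℕ, ∀ t ∈ T, ∀ s ∈ T, t.length = N' → s.length = N' →
      (q t = q s ↔ ∃ n : ℕ, ∃ R : ℕ → (ℕ → M),
        (∀ i ≤ n, R i ∈ GameRun T) ∧
        t = runPre (R 0) N' ∧ s = runPre (R n) N' ∧
        (∀ i : ℕ, 2 * i + 1 ≤ n → (N' : ℕ∞) ≤ runDelta (R (2 * i)) (R (2 * i + 1))) ∧
        (∀ i : ℕ, 2 * i + 2 ≤ n →
          ∀ m : ℕ, q (runPre (R (2 * i + 1)) m) = q (runPre (R (2 * i + 2)) m)))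

/-- A strict quotient map between game trees: the induced map on runs is surjective
and distinct runs downstairs lift to runs upstairs with the same Δ. -/
def StrictChronQuotient {M N : Type*} (T : Set (List M)) (Q : Set (List N))
    (q : List M → List N) : Prop :=
  (∀ R' ∈ GameRun Q, ∃ R ∈ GameRun T, ∀ n : ℕ, runPre R' n = q (runPre R n)) ∧
    ∀ R' ∈ GameRun Q, ∀ S' ∈ GameRun Q, R' ≠ S' →
      ∃ R ∈ GameRun T, ∃ S ∈ GameRun T,
        (∀ n : ℕ, runPre R' n = q (runPre R n)) ∧
        (∀ n : ℕ, runPre S' n = q (runPre S n)) ∧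
        runDelta R S = runDelta R' S'

section AuxLemmas

variable {M : Type*}

theorem runPre_length (R : ℕ → M) (n : ℕ) : (runPre R n).length = n := by
  simp [runPre]

theorem runPre_getElem (R : ℕ → M) {n i : ℕ} (h : i < (runPre R n).length) :
    (runPre R n)[i] = R i := by
  simp [runPre]

theorem runPre_zero (R : ℕ → M) : runPre R 0 = [] := rfl

theorem runPre_succ (R : ℕ → M) (n : ℕ) : runPre R (n + 1) = runPre R n ++ [R n] := by
  rw [runPre, List.ofFn_succ']
  simp [List.concat_eq_append, runPre]

theorem runPre_take (R : ℕ → M) (n k : ℕ) : (runPre R n).take k = runPre R (min k n) := by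
  apply List.ext_getElem
  · simp [runPre_length]
  · intro i h1 h2
    rw [List.getElem_take, runPre_getElem, runPre_getElem]

theorem runPre_eq_elim {R S : ℕ → M} {n : ℕ} (h : runPre R n = runPre S n)
    {i : ℕ} (hi : i < n) : R i = S i := by
  have h1 : (runPre R n)[i]'(by rw [runPre_length]; exact hi) =
      (runPre S n)[i]'(by rw [runPre_length]; exact hi) := by
    congr 1
  rwa [runPre_getElem, runPre_getElem] at h1

theorem le_runDelta {R S : ℕ → M} {N : ℕ} (h : ∀ j < N, R j = S j) :
    (N : ℕ∞) ≤ runDelta R S := by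
  apply le_sInf
  rintro x ⟨j, hj, rfl⟩
  by_contra hc
  push_neg at hc
  exact hj (h j (by exact_mod_cast hc))

theorem runDelta_le {R S : ℕ → M} {j : ℕ} (h : R j ≠ S j) : runDelta R S ≤ j :=
  sInf_le ⟨j, h, rfl⟩

theorem le_runDelta_self (R : ℕ → M) (N : ℕ) : (N : ℕ∞) ≤ runDelta R R :=
  le_runDelta (fun _ _ => rfl)

theorem runPre_eq_of_le_delta {R S : ℕ → M} {N : ℕ} (h : (N : ℕ∞) ≤ runDelta R S) :
    runPre R N = runPre S N := by
  apply List.ext_getElem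
  · simp [runPre_length]
  · intro i h1 h2
    rw [runPre_getElem, runPre_getElem]
    by_contra hne
    have hi : i < N := by simpa [runPre_length] using h1
    have h3 : (N : ℕ∞) ≤ (i : ℕ∞) := h.trans (runDelta_le hne)
    exact absurd (by exact_mod_cast h3 : N ≤ i) (by omega)

theorem delta_of_runPre_eq {R S : ℕ → M} {N : ℕ} (h : runPre R N = runPre S N) :
    (N : ℕ∞) ≤ runDelta R S :=
  le_runDelta (fun _ hj => runPre_eq_elim h hj)

/-- The backward direction of the quotient condition holds for any map. -/
theorem chain_imp {M N : Type*} (q : List M → List N) {N' n : ℕ} {R : ℕ → ℕ → M}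
    (hΔ : ∀ i, 2 * i + 1 ≤ n → (N' : ℕ∞) ≤ runDelta (R (2 * i)) (R (2 * i + 1)))
    (hqb : ∀ i, 2 * i + 2 ≤ n → ∀ m, q (runPre (R (2 * i + 1)) m) = q (runPre (R (2 * i + 2)) m)) :
    q (runPre (R 0) N') = q (runPre (R n) N') := by
  induction n with
  | zero => rfl
  | succ k ih =>
    have hk : q (runPre (R 0) N') = q (runPre (R k) N') :=
      ih (fun i hi => hΔ i (by omega)) (fun i hi => hqb i (by omega))
    rcases Nat.even_or_odd k with ⟨m, hm⟩ | ⟨m, hm⟩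
    · have e : k = 2 * m := by omega
      subst e
      rw [hk]
      exact congrArg q (runPre_eq_of_le_delta (hΔ m (by omega)))
    · have e : k = 2 * m + 1 := by omega
      subst e
      rw [hk]
      exact hqb m (by omega) N'

/-- Auxiliary: iterated one-step extension of a moment in a game tree. -/
noncomputable def extF {T : Set (List M)} (hT : IsGameTree T) (t : List M) (ht : t ∈ T) :
    ℕ → {u : List M // u ∈ T}
  | 0 => ⟨t, ht⟩
  | n + 1 =>
    ⟨(extF hT t ht n).1 ++ [Classical.choose (hT.2 (extF hT t ht n).1 (extF hT t ht n).2)],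
      Classical.choose_spec (hT.2 (extF hT t ht n).1 (extF hT t ht n).2)⟩

theorem extF_len {T : Set (List M)} (hT : IsGameTree T) (t : List M) (ht : t ∈ T) (n : ℕ) :
    (extF hT t ht n).1.length = t.length + n := by
  induction n with
  | zero => rfl
  | succ k ih => rw [extF, List.length_append, ih]; simp; omega

theorem extF_pre {T : Set (List M)} (hT : IsGameTree T) (t : List M) (ht : t ∈ T)
    {a b : ℕ} (hab : a ≤ b) : (extF hT t ht a).1 <+: (extF hT t ht b).1 := by
  induction b with
  | zero =>
    have : a = 0 := by omega
    subst this; exact List.prefix_refl _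
  | succ k ih =>
    rcases Nat.lt_or_ge a (k + 1) with h | h
    · exact (ih (by omega)).trans
        ⟨[Classical.choose (hT.2 (extF hT t ht k).1 (extF hT t ht k).2)], by rw [extF]⟩
    · have : a = k + 1 := by omega
      subst this; exact List.prefix_refl _

/-- Every moment of a game tree extends to a run through it. -/
theorem extendRun {T : Set (List M)} (hT : IsGameTree T) {t : List M} (ht : t ∈ T) :
    ∃ R ∈ GameRun T, runPre R t.length = t := by
  obtain ⟨x0, _⟩ := hT.2 t ht
  have hb : ∀ i : ℕ, i < (extF hT t ht (i + 1)).1.length := by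
    intro i; rw [extF_len]; omega
  refine ⟨fun i => (extF hT t ht (i + 1)).1.getD i x0, ?_, ?_⟩
  all_goals
    have key : ∀ n, runPre (fun i => (extF hT t ht (i + 1)).1.getD i x0) n =
        (extF hT t ht n).1.take n := by
      intro n
      apply List.ext_getElem
      · rw [runPre_length, List.length_take, extF_len]; omega
      · intro i h1 h2
        have hi : i < n := by simpa [runPre_length] using h1
        rw [runPre_getElem, List.getElem_take]
        rw [List.getD_eq_getElem _ _ (hb i)]
        exact (extF_pre hT t ht hi).getElem (hb i)
  · intro n
    rw [key]
    exact hT.1 _ (extF hT t ht n).2 n (by rw [extF_len]; omega)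
  · rw [key]
    have hp : (extF hT t ht 0).1 <+: (extF hT t ht t.length).1 :=
      extF_pre hT t ht (by omega)
    have h2 : (extF hT t ht t.length).1.take (extF hT t ht 0).1.length = (extF hT t ht 0).1 :=
      (List.prefix_iff_eq_take.mp hp).symm
    exact h2

/-- The pushforward of a run along a chronological map. -/
theorem chron_push {M N : Type*} {T : Set (List M)} {Q : Set (List N)} {q : List M → List N}
    (hq : IsChron T Q q) {R : ℕ → M} (hR : R ∈ GameRun T) :
    ∃ S ∈ GameRun Q, ∀ n, runPre S n = q (runPre R n) := by
  have hlen1 : (q (runPre R 1)).length = 1 := by rw [hq.2.1 _ (hR 1), runPre_length]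
  have hne : q (runPre R 1) ≠ [] := by
    intro h; rw [h] at hlen1; simp at hlen1
  set y0 : N := (q (runPre R 1)).head hne with hy0
  set S : ℕ → N := fun i => (q (runPre R (i + 1))).getD i y0 with hS
  have key : ∀ n, runPre S n = q (runPre R n) := by
    intro n
    apply List.ext_getElem
    · rw [runPre_length, hq.2.1 _ (hR n), runPre_length]
    · intro i h1 h2
      have hi : i < n := by simpa [runPre_length] using h1
      rw [runPre_getElem, hS]
      simp only
      have hleni : (q (runPre R (i + 1))).length = i + 1 := by
        rw [hq.2.1 _ (hR (i + 1)), runPre_length]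
      rw [List.getD_eq_getElem _ _ (by omega)]
      have e : q (runPre R (i + 1)) = (q (runPre R n)).take (i + 1) := by
        have h3 := hq.2.2 _ (hR n) (i + 1) (by rw [runPre_length]; omega)
        rw [runPre_take, min_eq_left (by omega)] at h3
        exact h3
      have hgd := congrArg (fun l => l.getD i y0) e
      rw [List.getD_eq_getElem _ _ (by omega), List.getD_eq_getElem _ _
        (by rw [List.length_take]; omega)] at hgd
      rw [hgd, List.getElem_take]
  exact ⟨S, fun n => (key n) ▸ hq.1 _ (hR n), key⟩

/-- A chain with five runs. -/
theorem chain5 {M N : Type*} {T : Set (List M)} (q : List M → List N) {N' : ℕ} {t s : List M}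
    {P0 P1 P2 P3 P4 : ℕ → M}
    (h0 : P0 ∈ GameRun T) (h1 : P1 ∈ GameRun T) (h2 : P2 ∈ GameRun T)
    (h3 : P3 ∈ GameRun T) (h4 : P4 ∈ GameRun T)
    (ht : t = runPre P0 N') (hs : s = runPre P4 N')
    (hd1 : (N' : ℕ∞) ≤ runDelta P0 P1)
    (hm1 : ∀ m, q (runPre P1 m) = q (runPre P2 m))
    (hd2 : (N' : ℕ∞) ≤ runDelta P2 P3)
    (hm2 : ∀ m, q (runPre P3 m) = q (runPre P4 m)) :
    ∃ n : ℕ, ∃ R : ℕ → (ℕ → M),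
      (∀ i ≤ n, R i ∈ GameRun T) ∧
      t = runPre (R 0) N' ∧ s = runPre (R n) N' ∧
      (∀ i : ℕ, 2 * i + 1 ≤ n → (N' : ℕ∞) ≤ runDelta (R (2 * i)) (R (2 * i + 1))) ∧
      (∀ i : ℕ, 2 * i + 2 ≤ n →
        ∀ m : ℕ, q (runPre (R (2 * i + 1)) m) = q (runPre (R (2 * i + 2)) m)) := by
  refine ⟨4, fun i => match i with | 0 => P0 | 1 => P1 | 2 => P2 | 3 => P3 | _ => P4,
    ?_, ht, hs, ?_, ?_⟩
  · intro i hi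
    interval_cases i <;> assumption
  · intro i hi
    have : i ≤ 1 := by omega
    interval_cases i
    · exact hd1
    · exact hd2
  · intro i hi m
    have : i ≤ 1 := by omega
    interval_cases i
    · exact hm1 m
    · exact hm2 m

/-- A chain with four runs. -/
theorem chain4 {M N : Type*} {T : Set (List M)} (q : List M → List N) {N' : ℕ} {t s : List M}
    {P0 P1 P2 P3 : ℕ → M}
    (h0 : P0 ∈ GameRun T) (h1 : P1 ∈ GameRun T) (h2 : P2 ∈ GameRun T) (h3 : P3 ∈ GameRun T)
    (ht : t = runPre P0 N') (hs : s = runPre P3 N')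
    (hd1 : (N' : ℕ∞) ≤ runDelta P0 P1)
    (hm1 : ∀ m, q (runPre P1 m) = q (runPre P2 m))
    (hd2 : (N' : ℕ∞) ≤ runDelta P2 P3) :
    ∃ n : ℕ, ∃ R : ℕ → (ℕ → M),
      (∀ i ≤ n, R i ∈ GameRun T) ∧
      t = runPre (R 0) N' ∧ s = runPre (R n) N' ∧
      (∀ i : ℕ, 2 * i + 1 ≤ n → (N' : ℕ∞) ≤ runDelta (R (2 * i)) (R (2 * i + 1))) ∧
      (∀ i : ℕ, 2 * i + 2 ≤ n →
        ∀ m : ℕ, q (runPre (R (2 * i + 1)) m) = q (runPre (R (2 * i + 2)) m)) := by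
  refine ⟨3, fun i => match i with | 0 => P0 | 1 => P1 | 2 => P2 | _ => P3,
    ?_, ht, hs, ?_, ?_⟩
  · intro i hi
    interval_cases i <;> assumption
  · intro i hi
    have : i ≤ 1 := by omega
    interval_cases i
    · exact hd1
    · exact hd2
  · intro i hi m
    have : i = 0 := by omega
    subst this
    exact hm1 m

end AuxLemmas

section Example

/-- Trees of the form "all finite prefixes of a family of runs". -/
def preSet {M : Type*} (F : Set (ℕ → M)) : Set (List M) :=
  {t | ∃ R ∈ F, ∃ k, t = runPre R k}

theorem preSet_tree {M : Type*} (F : Set (ℕ → M)) : IsGameTree (preSet F) := by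
  constructor
  · rintro t ⟨R, hR, k, rfl⟩ j _
    rw [runPre_take]
    exact ⟨R, hR, _, rfl⟩
  · rintro t ⟨R, hR, k, rfl⟩
    exact ⟨R k, R, hR, k + 1, (runPre_succ R k).symm⟩

theorem preSet_run {M : Type*} {F : Set (ℕ → M)} {R : ℕ → M} (hR : R ∈ F) :
    R ∈ GameRun (preSet F) := fun n => ⟨R, hR, n, rfl⟩

theorem mem_preSet_len {M : Type*} {F : Set (ℕ → M)} {t : List M} (ht : t ∈ preSet F) :
    ∃ R ∈ F, t = runPre R t.length := by
  obtain ⟨R, hR, k, rfl⟩ := ht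
  rw [runPre_length]
  exact ⟨R, hR, rfl⟩

def Urun (n : ℕ) : ℕ → ℕ := fun i => if i = 0 then 2 * n else 0
def Vrun (n : ℕ) : ℕ → ℕ := fun i => if i = 0 then 2 * n + 1 else if i = 1 then 1 else 0
def Xrun (n : ℕ) : ℕ → ℕ := fun i => if i = 0 then 2 * n else if i = 1 then 2 else 0
def Yrun (n : ℕ) : ℕ → ℕ := fun i => if i = 0 then 2 * n + 1 else if i = 1 then 2 else 0
def Arun : ℕ → ℕ := fun _ => 0
def Brun : ℕ → ℕ := fun i => if i = 1 then 1 else 0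
def Crun : ℕ → ℕ := fun i => if i = 1 then 2 else 0

def TRuns : Set (ℕ → ℕ) := {R | ∃ n, R = Urun n ∨ R = Vrun n ∨ R = Xrun n ∨ R = Yrun n}
def QRuns : Set (ℕ → ℕ) := {R | R = Arun ∨ R = Brun ∨ R = Crun}

def qmap0 : List ℕ → List ℕ := fun t => t.set 0 0
def zh (R : ℕ → ℕ) : ℕ → ℕ := fun i => if i = 0 then 0 else R i

theorem qmap0_runPre (R : ℕ → ℕ) (k : ℕ) : qmap0 (runPre R k) = runPre (zh R) k := by
  apply List.ext_getElem
  · simp [qmap0, runPre_length]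
  · intro i h1 h2
    simp only [qmap0] at h1 ⊢
    rw [List.getElem_set, runPre_getElem, runPre_getElem]
    by_cases hi : i = 0
    · subst hi; simp [zh]
    · rw [if_neg (fun h => hi h.symm)]
      simp [zh, hi]

theorem zh_U (n : ℕ) : zh (Urun n) = Arun := by
  funext i; by_cases h : i = 0 <;> simp [zh, Urun, Arun, h]

theorem zh_V (n : ℕ) : zh (Vrun n) = Brun := by
  funext i; by_cases h : i = 0 <;> simp [zh, Vrun, Brun, h]

theorem zh_X (n : ℕ) : zh (Xrun n) = Crun := by
  funext i; by_cases h : i = 0 <;> simp [zh, Xrun, Crun, h]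

theorem zh_Y (n : ℕ) : zh (Yrun n) = Crun := by
  funext i; by_cases h : i = 0 <;> simp [zh, Yrun, Crun, h]

theorem zh_mem {W : ℕ → ℕ} (hW : W ∈ TRuns) : zh W ∈ QRuns := by
  obtain ⟨n, rfl | rfl | rfl | rfl⟩ := hW
  · rw [zh_U]; exact Or.inl rfl
  · rw [zh_V]; exact Or.inr (Or.inl rfl)
  · rw [zh_X]; exact Or.inr (Or.inr rfl)
  · rw [zh_Y]; exact Or.inr (Or.inr rfl)

theorem zh_eq_of_val1 {W W' : ℕ → ℕ} (hW : W ∈ TRuns) (hW' : W' ∈ TRuns)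
    (h : W 1 = W' 1) : zh W = zh W' := by
  obtain ⟨n, rfl | rfl | rfl | rfl⟩ := hW <;> obtain ⟨m, rfl | rfl | rfl | rfl⟩ := hW' <;>
    first
      | (rw [zh_U, zh_U]) | (rw [zh_V, zh_V])
      | (rw [zh_X, zh_X]) | (rw [zh_X, zh_Y]) | (rw [zh_Y, zh_X]) | (rw [zh_Y, zh_Y])
      | (simp [Urun, Vrun, Xrun, Yrun] at h)

theorem bridge {W : ℕ → ℕ} (hW : W ∈ TRuns) :
    ∃ B ∈ TRuns, W 0 = B 0 ∧ zh B = Crun := by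
  obtain ⟨n, rfl | rfl | rfl | rfl⟩ := hW
  · exact ⟨Xrun n, ⟨n, Or.inr (Or.inr (Or.inl rfl))⟩, by simp [Urun, Xrun], zh_X n⟩
  · exact ⟨Yrun n, ⟨n, Or.inr (Or.inr (Or.inr rfl))⟩, by simp [Vrun, Yrun], zh_Y n⟩
  · exact ⟨Xrun n, ⟨n, Or.inr (Or.inr (Or.inl rfl))⟩, rfl, zh_X n⟩
  · exact ⟨Yrun n, ⟨n, Or.inr (Or.inr (Or.inr rfl))⟩, rfl, zh_Y n⟩

theorem qmap0_chron : IsChron (preSet TRuns) (preSet QRuns) qmap0 := by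
  refine ⟨?_, ?_, ?_⟩
  · rintro t ⟨W, hW, k, rfl⟩
    rw [qmap0_runPre]
    exact ⟨zh W, zh_mem hW, k, rfl⟩
  · intro t _
    simp [qmap0]
  · intro t _ k _
    show (t.take k).set 0 0 = (t.set 0 0).take k
    cases t <;> cases k <;> simp

theorem qmap0_surj : ∀ s ∈ preSet QRuns, ∃ t ∈ preSet TRuns, qmap0 t = s := by
  rintro s ⟨S, hS, k, rfl⟩
  rcases hS with rfl | rfl | rfl
  · exact ⟨runPre (Urun 0) k, ⟨Urun 0, ⟨0, Or.inl rfl⟩, k, rfl⟩,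
      by rw [qmap0_runPre, zh_U]⟩
  · exact ⟨runPre (Vrun 0) k, ⟨Vrun 0, ⟨0, Or.inr (Or.inl rfl)⟩, k, rfl⟩,
      by rw [qmap0_runPre, zh_V]⟩
  · exact ⟨runPre (Xrun 0) k, ⟨Xrun 0, ⟨0, Or.inr (Or.inr (Or.inl rfl))⟩, k, rfl⟩,
      by rw [qmap0_runPre, zh_X]⟩

end Example

theorem strict_quotient_is_quotient_not_conversely :
    (∀ (M N : Type) (T : Set (List M)) (Q : Set (List N)) (q : List M → List N),
        IsGameTree T → IsGameTree Q → IsChron T Q q → (∀ s ∈ Q, ∃ t ∈ T, q t = s) →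
        StrictChronQuotient T Q q → ChronQuotient T Q q) ∧
    (∃ (T Q : Set (List ℕ)) (q : List ℕ → List ℕ),
        IsGameTree T ∧ IsGameTree Q ∧ IsChron T Q q ∧ (∀ s ∈ Q, ∃ t ∈ T, q t = s) ∧
        ChronQuotient T Q q ∧ ¬ StrictChronQuotient T Q q) := by
  constructor
  · intro M N T Q q hT hQ hq hsurj hstrict
    refine ⟨hsurj, ?_⟩
    intro N' t ht s hs htl hsl
    constructor
    · intro hqts
      obtain ⟨Rt, hRt, hRtp⟩ := extendRun hT ht
      obtain ⟨Rs, hRs, hRsp⟩ := extendRun hT hs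
      rw [htl] at hRtp
      rw [hsl] at hRsp
      obtain ⟨St, hSt, hStp⟩ := chron_push hq hRt
      obtain ⟨Ss, hSs, hSsp⟩ := chron_push hq hRs
      by_cases hSS : St = Ss
      · exact chain4 q hRt hRt hRs hRs hRtp.symm hRsp.symm (le_runDelta_self Rt N')
          (fun m => by rw [← hStp m, ← hSsp m, hSS]) (le_runDelta_self Rs N')
      · obtain ⟨S, hS, S', hS', hSp, hS'p, hΔ⟩ := hstrict.2 St hSt Ss hSs hSS
        have hd : (N' : ℕ∞) ≤ runDelta St Ss := by
          apply delta_of_runPre_eq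
          rw [hStp, hSsp, hRtp, hRsp]
          exact hqts
        exact chain5 q hRt hRt hS hS' hRs hRtp.symm hRsp.symm (le_runDelta_self Rt N')
          (fun m => by rw [← hStp m, ← hSp m]) (by rw [hΔ]; exact hd)
          (fun m => by rw [← hS'p m, ← hSsp m])
    · rintro ⟨n, R, h1, h2, h3, h4, h5⟩
      rw [h2, h3]
      exact chain_imp q h4 h5
  · refine ⟨preSet TRuns, preSet QRuns, qmap0, preSet_tree _, preSet_tree _, qmap0_chron,
      qmap0_surj, ⟨qmap0_surj, ?_⟩, ?_⟩
    · intro N' t ht s hs htl hsl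
      constructor
      · intro hq
        obtain ⟨W, hW, htW⟩ := mem_preSet_len ht
        rw [htl] at htW
        obtain ⟨W', hW', hsW⟩ := mem_preSet_len hs
        rw [hsl] at hsW
        rcases Nat.lt_or_ge N' 2 with hN2 | hN2
        · interval_cases N'
          · refine ⟨0, fun _ => W, fun i _ => preSet_run hW, htW, ?_, ?_, ?_⟩
            · rw [hsW, runPre_zero, runPre_zero]
            · intro i hi; omega
            · intro i hi; omega
          · obtain ⟨B, hB, hB0, hBC⟩ := bridge hW
            obtain ⟨B', hB', hB'0, hB'C⟩ := bridge hW'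
            exact chain4 qmap0 (preSet_run hW) (preSet_run hB) (preSet_run hB')
              (preSet_run hW') htW hsW
              (le_runDelta (by intro j hj; interval_cases j; exact hB0))
              (fun m => by rw [qmap0_runPre, qmap0_runPre, hBC, hB'C])
              (le_runDelta (by intro j hj; interval_cases j; exact hB'0.symm))
        · have h2 : zh W = zh W' := by
            apply zh_eq_of_val1 hW hW'
            rw [htW, hsW, qmap0_runPre, qmap0_runPre] at hq
            have h1 := runPre_eq_elim hq (show 1 < N' by omega)
            simpa [zh] using h1
          exact chain4 qmap0 (preSet_run hW) (preSet_run hW) (preSet_run hW')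
            (preSet_run hW') htW hsW (le_runDelta_self W N')
            (fun m => by rw [qmap0_runPre, qmap0_runPre, h2]) (le_runDelta_self W' N')
      · rintro ⟨n, R, h1, h2, h3, h4, h5⟩
        rw [h2, h3]
        exact chain_imp qmap0 h4 h5
    · rintro ⟨hs1, hs2⟩
      have hA : Arun ∈ GameRun (preSet QRuns) := preSet_run (Or.inl rfl)
      have hB : Brun ∈ GameRun (preSet QRuns) := preSet_run (Or.inr (Or.inl rfl))
      have hAB : Arun ≠ Brun := by
        intro h
        have h1 := congrFun h 1
        simp [Arun, Brun] at h1
      obtain ⟨R, hR, S, hS, hqR, hqS, hΔ⟩ := hs2 Arun hA Brun hB hAB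
      have hd : runDelta Arun Brun = 1 := by
        apply le_antisymm
        · simpa using runDelta_le (R := Arun) (S := Brun) (j := 1) (by simp [Arun, Brun])
        · simpa using le_runDelta (R := Arun) (S := Brun) (N := 1)
            (by intro j hj; interval_cases j; rfl)
      have zval : ∀ (R c : ℕ → ℕ), R ∈ GameRun (preSet TRuns) →
          (∀ n, runPre c n = qmap0 (runPre R n)) →
          ∃ W ∈ TRuns, R 0 = W 0 ∧ W 1 = c 1 := by
        intro R c hR hc
        obtain ⟨W, hW, hk⟩ := mem_preSet_len (hR 2)
        rw [runPre_length] at hk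
        have e0 : R 0 = W 0 := runPre_eq_elim hk (by omega)
        have e1 : R 1 = W 1 := runPre_eq_elim hk (by omega)
        have h2 := hc 2
        rw [qmap0_runPre] at h2
        have h3 : c 1 = zh R 1 := runPre_eq_elim h2 (by omega)
        refine ⟨W, hW, e0, ?_⟩
        rw [← e1, h3]
        simp [zh]
      obtain ⟨W, hW, hW0, hW1⟩ := zval R Arun hR hqR
      obtain ⟨W', hW', hW'0, hW'1⟩ := zval S Brun hS hqS
      have hR0 : ∃ a, R 0 = 2 * a := by
        obtain ⟨n, rfl | rfl | rfl | rfl⟩ := hW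
        · exact ⟨n, by simpa [Urun] using hW0⟩
        · simp [Vrun, Arun] at hW1
        · simp [Xrun, Arun] at hW1
        · simp [Yrun, Arun] at hW1
      have hS0 : ∃ b, S 0 = 2 * b + 1 := by
        obtain ⟨m, rfl | rfl | rfl | rfl⟩ := hW'
        · simp [Urun, Brun] at hW'1
        · exact ⟨m, by simpa [Vrun] using hW'0⟩
        · simp [Xrun, Brun] at hW'1
        · simp [Yrun, Brun] at hW'1
      have h01 : R 0 = S 0 := by
        by_contra hne
        have h1 : runDelta R S ≤ ((0 : ℕ) : ℕ∞) := runDelta_le hne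
        rw [hΔ, hd] at h1
        norm_num at h1
      obtain ⟨a, ha⟩ := hR0
      obtain ⟨b, hb⟩ := hS0
      omega
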